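/- Let I be a monomial ideal in S = K[x_1,…,x_n] and let u be a monomial with u ∈ Ĩ \ I, where Ĩ is the saturation of I. Then in every Stanley decomposition S/I = ⊕_{i=1}^r u_iK[Z_i] there is an index i with u_i = u and Z_i = ∅; that is, the 0-dimensional Stanley space uK occurs in every Stanley decomposition of S/I. -/

import Mathlib

open MvPolynomial

/-- The monomial `x^a` in `K[x_i : i ∈ σ]`. -/
noncomputable def mono (K : Type*) [Field K] {σ : Type*} (a : σ →₀ ℕ) :
    MvPolynomial σ K :=
  MvPolynomial.monomial a 1

/-- An ideal is a monomial ideal if it is generated by monomials. -/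
def IsMonomialIdeal {K : Type*} [Field K] {σ : Type*}
    (I : Ideal (MvPolynomial σ K)) : Prop :=
  ∃ A : Set (σ →₀ ℕ), I = Ideal.span ((fun a => mono K a) '' A)
/-- The graded maximal ideal `m = (x_i : i ∈ σ)`. -/
noncomputable def maxIdeal (K : Type*) [Field K] (σ : Type*) :
    Ideal (MvPolynomial σ K) :=
  Ideal.span (Set.range (X : σ → MvPolynomial σ K))

/-- The saturation `Ĩ = I : m^∞ = ⋃ₖ (I : mᵏ)`. -/
noncomputable def saturation {K : Type*} [Field K] {σ : Type*}
    (I : Ideal (MvPolynomial σ K)) : Ideal (MvPolynomial σ K) :=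
  ⨆ k : ℕ, I.colon ((maxIdeal K σ ^ k : Ideal (MvPolynomial σ K)) : Set (MvPolynomial σ K))

/-- The height of an ideal: the infimum of heights of primes minimal over it. -/
noncomputable def idealHeight {R : Type*} [CommRing R] (I : Ideal R) : ℕ∞ :=
  ⨅ P : {P : Ideal R // P ∈ I.minimalPrimes},
    Order.height (⟨P.1, P.2.1.1⟩ : PrimeSpectrum R)

/-- The family of residue classes of the monomials `x^{u i}·x^v`, `supp v ⊆ Z i`,
of a candidate Stanley decomposition `S/I = ⊕ᵢ x^{u i} K[Z i]`. -/
noncomputable def stanleyFamily {K : Type*} [Field K] {n : ℕ}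
    (I : Ideal (MvPolynomial (Fin n) K)) {r : ℕ}
    (u : Fin r → (Fin n →₀ ℕ)) (Z : Fin r → Finset (Fin n)) :
    (Σ i : Fin r, {v : Fin n →₀ ℕ // v.support ⊆ Z i}) →
      (MvPolynomial (Fin n) K ⧸ I) :=
  fun p => Ideal.Quotient.mk I (mono K (u p.1 + p.2.1))

/-- `S/I = ⊕ᵢ x^{u i} K[Z i]` is a Stanley decomposition: the residue classes of
the monomials `x^{u i}·x^v` (`supp v ⊆ Z i`) form a `K`-basis of `S/I`. -/
def IsStanleyDecomposition {K : Type*} [Field K] {n : ℕ}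
    (I : Ideal (MvPolynomial (Fin n) K)) {r : ℕ}
    (u : Fin r → (Fin n →₀ ℕ)) (Z : Fin r → Finset (Fin n)) : Prop :=
  LinearIndependent K (stanleyFamily I u Z) ∧
    Submodule.span K (Set.range (stanleyFamily I u Z)) = ⊤

lemma mono_mem_span_iff {K : Type*} [Field K] {σ : Type*} (A : Set (σ →₀ ℕ)) (b : σ →₀ ℕ) :
    mono K b ∈ Ideal.span ((fun a => mono K a) '' A) ↔ ∃ s ∈ A, s ≤ b := by
  classical
  unfold mono
  rw [mem_ideal_span_monomial_image]
  constructor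
  · intro h
    exact h b (by rw [mem_support_iff, coeff_monomial, if_pos rfl]; exact one_ne_zero)
  · rintro ⟨s, hs, hsb⟩ xi hxi
    rw [mem_support_iff, coeff_monomial] at hxi
    by_cases h : b = xi
    · exact ⟨s, hs, h ▸ hsb⟩
    · rw [if_neg h] at hxi; exact absurd rfl hxi

lemma coeff_zero_of_not_mem {K : Type*} [Field K] {σ : Type*} (A : Set (σ →₀ ℕ))
    {f : MvPolynomial σ K} (hf : f ∈ Ideal.span ((fun a => mono K a) '' A))
    {b : σ →₀ ℕ} (hb : mono K b ∉ Ideal.span ((fun a => mono K a) '' A)) :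
    MvPolynomial.coeff b f = 0 := by
  by_contra h
  unfold mono at hf
  rw [mem_ideal_span_monomial_image] at hf
  exact hb ((mono_mem_span_iff A b).mpr (hf b (mem_support_iff.mpr h)))

/-- If `u = x^a` is a monomial in `Ĩ \ I`, then the
`0`-dimensional Stanley space `uK` occurs in every Stanley decomposition of
`S/I`: there is an index `i` with `u_i = u` and `Z_i = ∅`. -/
theorem saturation_monomial_mem_every_stanley_decomposition
    {K : Type*} [Field K] {n : ℕ} (I : Ideal (MvPolynomial (Fin n) K))
    (hI : IsMonomialIdeal I) (a : Fin n →₀ ℕ)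
    (hmem : mono K a ∈ saturation I) (hnmem : mono K a ∉ I)
    {r : ℕ} (u : Fin r → (Fin n →₀ ℕ)) (Z : Fin r → Finset (Fin n))
    (hD : IsStanleyDecomposition I u Z) :
    ∃ i : Fin r, u i = a ∧ Z i = ∅ := by
  classical
  obtain ⟨A, hA⟩ := hI
  obtain ⟨hLI, hspan⟩ := hD
  unfold saturation at hmem
  have hmono : Monotone fun k : ℕ => I.colon ((maxIdeal K (Fin n) ^ k : Ideal (MvPolynomial (Fin n) K)) : Set (MvPolynomial (Fin n) K)) := by
    intro k l hkl
    exact Submodule.colon_mono le_rfl (SetLike.coe_subset_coe.mpr (Ideal.pow_le_pow_right hkl))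
  obtain ⟨k, hk⟩ := (Submodule.mem_iSup_of_directed _ hmono.directed_le).mp hmem
  have hkey : ∀ j : Fin n, mono K (a + Finsupp.single j k) ∈ I := by
    intro j
    have hX : (X j : MvPolynomial (Fin n) K) ∈ maxIdeal K (Fin n) :=
      Ideal.subset_span (Set.mem_range_self j)
    have hXk : (X j : MvPolynomial (Fin n) K) ^ k ∈ maxIdeal K (Fin n) ^ k :=
      Ideal.pow_mem_pow hX k
    have h1 := Submodule.mem_colon.mp hk _ hXk
    rw [smul_eq_mul] at h1
    have heq : mono K a * (X j : MvPolynomial (Fin n) K) ^ k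
        = mono K (a + Finsupp.single j k) := by
      unfold mono
      rw [X_pow_eq_monomial, monomial_mul, one_mul]
    rwa [heq] at h1
  have hsm : ∀ (cp : K) (x : MvPolynomial (Fin n) K),
      Ideal.Quotient.mk I (cp • x) = cp • Ideal.Quotient.mk I x := by
    intro cp x
    exact map_smul (Ideal.Quotient.mkₐ K I) cp x
  have hmem' : Ideal.Quotient.mk I (mono K a) ∈
      Submodule.span K (Set.range (stanleyFamily I u Z)) := hspan ▸ Submodule.mem_top
  obtain ⟨c, hc⟩ := Finsupp.mem_span_range_iff_exists_finsupp.mp hmem'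
  have hex : ∃ p ∈ c.support, u p.1 + p.2.1 = a := by
    by_contra hno
    push_neg at hno
    set g : MvPolynomial (Fin n) K :=
      c.sum (fun p cp => cp • mono K (u p.1 + p.2.1)) with hg
    have hfI : mono K a - g ∈ I := by
      rw [← Ideal.Quotient.eq_zero_iff_mem, map_sub, sub_eq_zero]
      rw [hg, Finsupp.sum, map_sum, ← hc, Finsupp.sum]
      refine (Finset.sum_congr rfl fun p hp => ?_).symm
      rw [hsm]
      rfl
    have hca : MvPolynomial.coeff a (mono K a - g) = 1 := by
      rw [MvPolynomial.coeff_sub]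
      have h1 : MvPolynomial.coeff a (mono K a) = 1 := by
        unfold mono; rw [coeff_monomial, if_pos rfl]
      have h2 : MvPolynomial.coeff a g = 0 := by
        rw [hg, Finsupp.sum, MvPolynomial.coeff_sum]
        refine Finset.sum_eq_zero fun p hp => ?_
        rw [MvPolynomial.coeff_smul]
        unfold mono
        rw [coeff_monomial, if_neg (hno p hp), smul_zero]
      rw [h1, h2, sub_zero]
    have hz := coeff_zero_of_not_mem A (hA ▸ hfI) (hA ▸ hnmem)
    rw [hca] at hz
    exact one_ne_zero hz
  obtain ⟨p, _, hpm⟩ := hex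
  have hZ : Z p.1 = ∅ := by
    by_contra hne
    obtain ⟨j, hj⟩ := Finset.nonempty_iff_ne_empty.mpr hne
    have hsupp : (p.2.1 + Finsupp.single j k).support ⊆ Z p.1 := by
      refine subset_trans Finsupp.support_add ?_
      apply Finset.union_subset p.2.2
      refine subset_trans Finsupp.support_single_subset ?_
      simpa using hj
    have hne0 := hLI.ne_zero ⟨p.1, ⟨p.2.1 + Finsupp.single j k, hsupp⟩⟩
    apply hne0
    show Ideal.Quotient.mk I (mono K (u p.1 + (p.2.1 + Finsupp.single j k))) = 0
    rw [Ideal.Quotient.eq_zero_iff_mem, ← add_assoc, hpm]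
    exact hkey j
  refine ⟨p.1, ?_, hZ⟩
  have hv : p.2.1 = 0 := Finsupp.support_eq_empty.mp (Finset.subset_empty.mp (hZ ▸ p.2.2))
  rw [hv, add_zero] at hpm
  exact hpm
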